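/- Let β and β′ be real numbers and let z ∈ ℂ with z ≠ β′. Then, with √ denoting the principal branch of the complex square root, Re(√(z − β)/√(z − β′)) ≥ 0. Consequently, |√(z − β) − √(z − β′)| ≤ |β − β′|/√|z − β′|. -/

import Mathlib

open Complex

lemma aux_log_half_re (x : ℂ) : (Complex.log x * ((1:ℂ)/2)).re = Real.log ‖x‖ / 2 := by
  simp [Complex.mul_re, Complex.log_re, Complex.log_im, Complex.div_re]
  ring

lemma aux_log_half_im (x : ℂ) : (Complex.log x * ((1:ℂ)/2)).im = Complex.arg x / 2 := by
  simp [Complex.mul_im, Complex.log_re, Complex.log_im]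
  ring

lemma sqrt_re_nonneg' (x : ℂ) : 0 ≤ (x ^ ((1:ℂ)/2)).re := by
  rcases eq_or_ne x 0 with rfl | hx
  · simp [Complex.zero_cpow (by norm_num : (1:ℂ)/2 ≠ 0)]
  · rw [Complex.cpow_def_of_ne_zero hx, Complex.exp_re, aux_log_half_re, aux_log_half_im]
    apply mul_nonneg (Real.exp_pos _).le
    apply Real.cos_nonneg_of_mem_Icc
    constructor
    · nlinarith [Complex.neg_pi_lt_arg x]
    · nlinarith [Complex.arg_le_pi x]

lemma sqrt_im_nonneg' (x : ℂ) (h : 0 ≤ x.im) : 0 ≤ (x ^ ((1:ℂ)/2)).im := by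
  rcases eq_or_ne x 0 with rfl | hx
  · simp [Complex.zero_cpow (by norm_num : (1:ℂ)/2 ≠ 0)]
  · rw [Complex.cpow_def_of_ne_zero hx, Complex.exp_im, aux_log_half_re, aux_log_half_im]
    have ha : 0 ≤ x.arg := Complex.arg_nonneg_iff.2 h
    have : 0 ≤ Real.sin (x.arg / 2) := by
      apply Real.sin_nonneg_of_nonneg_of_le_pi (by linarith)
      nlinarith [Complex.arg_le_pi x, Real.pi_pos]
    positivity

lemma sqrt_im_nonpos' (x : ℂ) (h : x.im < 0) : (x ^ ((1:ℂ)/2)).im ≤ 0 := by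
  have hx : x ≠ 0 := by
    intro h0; rw [h0] at h; simp at h
  rw [Complex.cpow_def_of_ne_zero hx, Complex.exp_im, aux_log_half_re, aux_log_half_im]
  have ha : x.arg < 0 := Complex.arg_neg_iff.2 h
  have hs : Real.sin (x.arg / 2) ≤ 0 := by
    have := Real.sin_nonneg_of_nonneg_of_le_pi (x := -(x.arg/2))
      (by linarith) (by nlinarith [Complex.neg_pi_lt_arg x, Real.pi_pos])
    rw [Real.sin_neg] at this; linarith
  have he := (Real.exp_pos (Real.log ‖x‖ / 2)).le
  nlinarith

lemma sqrt_mul_self' (x : ℂ) : x ^ ((1:ℂ)/2) * x ^ ((1:ℂ)/2) = x := by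
  rcases eq_or_ne x 0 with rfl | hx
  · simp [Complex.zero_cpow (by norm_num : (1:ℂ)/2 ≠ 0)]
  · rw [← Complex.cpow_add _ _ hx]
    norm_num

lemma sqrt_abs' (x : ℂ) : ‖x ^ ((1:ℂ)/2)‖ = Real.sqrt ‖x‖ := by
  have h : ((1:ℂ)/2) = ((1/2 : ℝ) : ℂ) := by norm_num
  rw [h, Complex.norm_cpow_real, Real.sqrt_eq_rpow]

/-- For real shifts `β, β′` and `z ≠ β′`, the ratio of principal
square roots `√(z − β)/√(z − β′)` has non-negative real part, and consequently
`|√(z − β) − √(z − β′)| ≤ |β − β′|/√|z − β′|`. -/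
theorem sqrt_ratio_re_nonneg (β β' : ℝ) (z : ℂ) (hz : z ≠ (β' : ℂ)) :
    0 ≤ ((z - (β : ℂ)) ^ ((1:ℂ)/2) / (z - (β' : ℂ)) ^ ((1:ℂ)/2)).re ∧
    ‖(z - (β : ℂ)) ^ ((1:ℂ)/2) - (z - (β' : ℂ)) ^ ((1:ℂ)/2)‖ ≤
      |β - β'| / Real.sqrt ‖z - (β' : ℂ)‖ := by
  set w : ℂ := z - (β : ℂ) with hw
  set w' : ℂ := z - (β' : ℂ) with hw'
  have hw'0 : w' ≠ 0 := sub_ne_zero.2 hz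
  set a : ℂ := w ^ ((1:ℂ)/2) with ha
  set b : ℂ := w' ^ ((1:ℂ)/2) with hb
  have hb0 : b ≠ 0 := by
    simp only [hb, Ne, Complex.cpow_eq_zero_iff, not_and_or]
    exact Or.inl hw'0
  have him : w.im = w'.im := by simp [hw, hw']
  have h1 : 0 ≤ a.re := sqrt_re_nonneg' w
  have h2 : 0 ≤ b.re := sqrt_re_nonneg' w'
  have hkey : 0 ≤ a.re * b.re + a.im * b.im := by
    rcases le_or_gt 0 w'.im with h | h
    · have h3 : 0 ≤ a.im := sqrt_im_nonneg' w (him ▸ h)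
      have h4 : 0 ≤ b.im := sqrt_im_nonneg' w' h
      nlinarith
    · have h3 : a.im ≤ 0 := sqrt_im_nonpos' w (him ▸ h)
      have h4 : b.im ≤ 0 := sqrt_im_nonpos' w' h
      nlinarith
  constructor
  · rw [Complex.div_re, ← add_div]
    exact div_nonneg hkey (Complex.normSq_nonneg b)
  · -- second part
    have hbabs : ‖b‖ = Real.sqrt ‖w'‖ := sqrt_abs' w'
    have hbpos : 0 < ‖b‖ := by
      rw [hbabs]
      exact Real.sqrt_pos.2 (norm_pos_iff.2 hw'0)
    have hprod : (a - b) * (a + b) = ((β' - β : ℝ) : ℂ) := by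
      have h5 := sqrt_mul_self' w
      have h6 := sqrt_mul_self' w'
      rw [← ha] at h5; rw [← hb] at h6
      have hr : (a - b) * (a + b) = a * a - b * b := by ring
      rw [hr, h5, h6, hw, hw']
      push_cast
      ring
    have habsprod : ‖a - b‖ * ‖a + b‖ = |β - β'| := by
      rw [← norm_mul, hprod, Complex.norm_real, Real.norm_eq_abs, abs_sub_comm]
    have hsum : ‖b‖ ≤ ‖a + b‖ := by
      have hcn : Complex.normSq b ≤ Complex.normSq (a + b) := by
        rw [Complex.normSq_add]
        have : (a * (starRingEnd ℂ) b).re = a.re * b.re + a.im * b.im := by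
          simp [Complex.mul_re]
        nlinarith [Complex.normSq_nonneg a]
      rw [Complex.norm_def, Complex.norm_def]
      exact Real.sqrt_le_sqrt hcn
    rw [← hbabs, le_div_iff₀ hbpos]
    calc ‖a - b‖ * ‖b‖
        ≤ ‖a - b‖ * ‖a + b‖ :=
          mul_le_mul_of_nonneg_left hsum (norm_nonneg _)
      _ = |β - β'| := habsprod
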